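/- arXiv:1910.00807 — 2 statements merged into one kernel-verified Lean document; each statement's English description precedes it below -/
import Mathlib

section
/- The Hadamard finite-part integral f.p.∫_0^∞ x^{-3} e^{-x} dx equals 3/4 − γ/2. Equivalently, lim_{ε↓0} ( ∫_ε^∞ e^{-x}/x³ dx − 1/(2ε²) + 1/ε + (1/2) log ε ) = 3/4 − γ/2. -/
open Real MeasureTheory Filter Set




lemma abs_log_le_aux {x : ℝ} (hx : 0 < x) : |Real.log x| ≤ x + 2 * x ^ (-2⁻¹ : ℝ) := by
  have hr : (0:ℝ) ≤ x ^ (-2⁻¹ : ℝ) := (Real.rpow_pos_of_pos hx _).le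
  rcases le_or_gt 1 x with h | h
  · rw [abs_of_nonneg (Real.log_nonneg h)]
    linarith [Real.log_le_sub_one_of_pos hx]
  · rw [abs_of_nonpos (Real.log_nonpos hx.le h.le)]
    have h1 : Real.log (x ^ (-2⁻¹ : ℝ)) ≤ x ^ (-2⁻¹ : ℝ) - 1 :=
      Real.log_le_sub_one_of_pos (Real.rpow_pos_of_pos hx _)
    rw [Real.log_rpow hx] at h1
    nlinarith [hx.le]

lemma integrable_exp_neg_log : IntegrableOn (fun x : ℝ => Real.exp (-x) * Real.log x) (Ioi 0) := by
  have g1 := Real.GammaIntegral_convergent (s := 2) (by norm_num)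
  have g2 := Real.GammaIntegral_convergent (s := 1/2) (by norm_num)
  have hg : IntegrableOn
      (fun x : ℝ => Real.exp (-x) * x ^ ((2:ℝ) - 1) + 2 * (Real.exp (-x) * x ^ ((1/2:ℝ) - 1)))
      (Ioi 0) := g1.add (g2.const_mul 2)
  refine Integrable.mono' hg ?_ ?_
  · exact (((Real.continuous_exp.comp continuous_neg).continuousOn).mul
      (Real.continuousOn_log.mono (fun x hx => ne_of_gt hx))).aestronglyMeasurable
      measurableSet_Ioi
  · filter_upwards [ae_restrict_mem measurableSet_Ioi] with x hx
    have hx : (0:ℝ) < x := hx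
    have h1 : x ^ ((2:ℝ) - 1) = x := by
      rw [show (2:ℝ) - 1 = 1 by norm_num, Real.rpow_one]
    have h2 : ((1/2:ℝ) - 1) = (-2⁻¹ : ℝ) := by norm_num
    rw [norm_mul, Real.norm_eq_abs, Real.norm_eq_abs, abs_of_pos (Real.exp_pos _), h1, h2]
    have := abs_log_le_aux hx
    have hep := (Real.exp_pos (-x)).le
    nlinarith [mul_le_mul_of_nonneg_left this hep]





lemma integral_exp_neg_log : (∫ x in Ioi (0:ℝ), Real.exp (-x) * Real.log x)
    = - Real.eulerMascheroniConstant := by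
  set c : ℂ := ∫ t : ℝ in Ioi 0, (t:ℂ) ^ ((1:ℂ) - 1) * (Real.log t * Real.exp (-t)) with hc
  have h1 : HasDerivAt Complex.GammaIntegral c 1 :=
    Complex.hasDerivAt_GammaIntegral (by norm_num)
  have h2 : Complex.GammaIntegral =ᶠ[nhds (1:ℂ)] Complex.Gamma := by
    have : {s : ℂ | 0 < s.re} ∈ nhds (1:ℂ) :=
      (isOpen_lt continuous_const Complex.continuous_re).mem_nhds (by norm_num)
    filter_upwards [this] with s hs
    exact (Complex.Gamma_eq_integral hs).symm
  have h3 : HasDerivAt Complex.Gamma c 1 := h1.congr_of_eventuallyEq h2.symm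
  have h4 : HasDerivAt (fun y : ℝ => Complex.Gamma y) c 1 := by
    simpa using h3.comp_ofReal
  have h5 : HasDerivAt (fun y : ℝ => ((Real.Gamma y : ℂ)))
      ((- Real.eulerMascheroniConstant : ℝ) : ℂ) 1 :=
    Real.hasDerivAt_Gamma_one.ofReal_comp
  have h6 : c = ((- Real.eulerMascheroniConstant : ℝ) : ℂ) := by
    have : (fun y : ℝ => Complex.Gamma y) = fun y : ℝ => ((Real.Gamma y : ℂ)) := by
      ext y; exact Complex.Gamma_ofReal y
    rw [this] at h4
    exact h4.unique h5
  have h7 : c = ((∫ x in Ioi (0:ℝ), Real.exp (-x) * Real.log x : ℝ) : ℂ) := by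
    rw [hc, show ((1:ℂ) - 1) = 0 by ring]
    rw [show (∫ t : ℝ in Ioi 0, (t:ℂ) ^ (0:ℂ) * (Real.log t * Real.exp (-t)))
        = ∫ t : ℝ in Ioi 0, ((Real.exp (-t) * Real.log t : ℝ) : ℂ) from by
      refine setIntegral_congr_fun measurableSet_Ioi fun t ht => ?_
      rw [Complex.cpow_zero]; push_cast; ring]
    exact integral_ofReal
  rw [h7] at h6
  exact_mod_cast h6





noncomputable def Phi (x : ℝ) : ℝ :=
  (-(1/2)) * (Real.exp (-x) / x ^ 2) + (1/2) * (Real.exp (-x) / x) + (1/2) * (Real.exp (-x) * Real.log x)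

lemma hasDerivAt_Phi {x : ℝ} (hx : 0 < x) :
    HasDerivAt Phi (Real.exp (-x) / x ^ 3 - (1/2) * (Real.exp (-x) * Real.log x)) x := by
  have hx0 : x ≠ 0 := hx.ne'
  have he : HasDerivAt (fun x : ℝ => Real.exp (-x)) (-Real.exp (-x)) x := by
    simpa using (hasDerivAt_neg x).exp
  have hp2 : HasDerivAt (fun x : ℝ => x ^ 2) (2 * x) x := by
    simpa using hasDerivAt_pow 2 x
  have h1 := (he.div hp2 (pow_ne_zero 2 hx0)).const_mul (-(1/2) : ℝ)
  have h2 := (he.div (hasDerivAt_id x) hx0).const_mul ((1/2) : ℝ)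
  have h3 := (he.mul (Real.hasDerivAt_log hx0)).const_mul ((1/2) : ℝ)
  have := (h1.add h2).add h3
  convert this using 1
  · rfl
  · rfl
  · rfl
  simp only [id]
  field_simp
  ring

lemma tendsto_Phi_atTop : Tendsto Phi atTop (nhds 0) := by
  have he : Tendsto (fun x : ℝ => Real.exp (-x)) atTop (nhds 0) := by
    simpa using Real.tendsto_exp_neg_atTop_nhds_zero
  have hinv : Tendsto (fun x : ℝ => x⁻¹) atTop (nhds 0) := tendsto_inv_atTop_zero
  have h1 : Tendsto (fun x : ℝ => Real.exp (-x) / x ^ 2) atTop (nhds 0) := by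
    have := he.mul (hinv.mul hinv)
    rw [mul_zero, zero_mul] at this
    refine this.congr' ?_
    filter_upwards [eventually_gt_atTop (0:ℝ)] with x hx
    field_simp [hx.ne']
  have h2 : Tendsto (fun x : ℝ => Real.exp (-x) / x) atTop (nhds 0) := by
    have := he.mul hinv
    rw [mul_zero] at this
    exact this.congr (fun x => (div_eq_mul_inv _ _).symm)
  have h3 : Tendsto (fun x : ℝ => Real.exp (-x) * Real.log x) atTop (nhds 0) := by
    have hlog : Tendsto (fun x : ℝ => Real.log x / x) atTop (nhds 0) :=
      Real.isLittleO_log_id_atTop.tendsto_div_nhds_zero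
    have hxe : Tendsto (fun x : ℝ => x * Real.exp (-x)) atTop (nhds 0) := by
      simpa using Real.tendsto_pow_mul_exp_neg_atTop_nhds_zero 1
    have := hlog.mul hxe
    rw [mul_zero] at this
    refine this.congr' ?_
    filter_upwards [eventually_gt_atTop (0:ℝ)] with x hx
    field_simp [hx.ne']
  have := ((h1.const_mul (-(1/2):ℝ)).add (h2.const_mul ((1/2):ℝ))).add (h3.const_mul ((1/2):ℝ))
  rw [show (-(1/2):ℝ) * 0 + 1/2 * 0 + 1/2 * 0 = (0:ℝ) by norm_num] at this
  exact this

lemma integrableOn_cube {ε : ℝ} (hε : 0 < ε) :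
    IntegrableOn (fun x : ℝ => Real.exp (-x) / x ^ 3) (Ioi ε) := by
  have hdom : IntegrableOn (fun x : ℝ => ε⁻¹ ^ 3 * Real.exp (-1 * x)) (Ioi ε) :=
    (exp_neg_integrableOn_Ioi ε one_pos).const_mul _
  refine Integrable.mono' hdom ?_ ?_
  · refine (((Real.continuous_exp.comp continuous_neg).continuousOn).div
      (continuous_pow 3).continuousOn (fun x hx => ?_)).aestronglyMeasurable measurableSet_Ioi
    exact pow_ne_zero _ (hε.trans hx).ne'
  · filter_upwards [ae_restrict_mem measurableSet_Ioi] with x hx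
    have hx : ε < x := hx
    have hx0 : 0 < x := hε.trans hx
    rw [Real.norm_eq_abs, abs_of_pos (div_pos (Real.exp_pos _) (pow_pos hx0 3)), neg_one_mul]
    rw [div_le_iff₀ (pow_pos hx0 3)]
    have h1 : ε ^ 3 ≤ x ^ 3 := pow_le_pow_left₀ hε.le hx.le 3
    have h2 : (0:ℝ) < ε ^ 3 := pow_pos hε 3
    have h3 : (1:ℝ) ≤ ε⁻¹ ^ 3 * x ^ 3 := by
      rw [inv_pow, ← div_eq_inv_mul, le_div_iff₀ h2, one_mul]
      exact h1
    nlinarith [Real.exp_pos (-x)]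
  
lemma key_identity {ε : ℝ} (hε : 0 < ε) :
    (∫ x in Ioi ε, Real.exp (-x) / x ^ 3)
      = - Phi ε + (1/2) * ∫ x in Ioi ε, Real.exp (-x) * Real.log x := by
  have hglog : IntegrableOn (fun x : ℝ => Real.exp (-x) * Real.log x) (Ioi ε) :=
    integrable_exp_neg_log.mono_set (Ioi_subset_Ioi hε.le)
  have hint : IntegrableOn
      (fun x : ℝ => Real.exp (-x) / x ^ 3 - (1/2) * (Real.exp (-x) * Real.log x)) (Ioi ε) :=
    (integrableOn_cube hε).sub (hglog.const_mul _)
  have hftc := integral_Ioi_of_hasDerivAt_of_tendsto'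
    (f := Phi) (a := ε) (m := 0)
    (fun x hx => hasDerivAt_Phi (lt_of_lt_of_le hε hx)) hint tendsto_Phi_atTop
  have hsplit : (∫ x in Ioi ε, (Real.exp (-x) / x ^ 3 - (1/2) * (Real.exp (-x) * Real.log x)))
      = (∫ x in Ioi ε, Real.exp (-x) / x ^ 3)
        - ∫ x in Ioi ε, (1/2) * (Real.exp (-x) * Real.log x) :=
    integral_sub (integrableOn_cube hε) (hglog.const_mul _)
  rw [hsplit] at hftc
  rw [integral_const_mul] at hftc
  linarith [hftc]




lemma exp_est3 {ε : ℝ} (h0 : 0 < ε) (h1 : ε ≤ 1) :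
    |Real.exp (-ε) - (1 - ε + ε ^ 2 / 2)| ≤ ε ^ 3 := by
  have h := Real.exp_bound (x := -ε) (by rw [abs_neg, abs_of_pos h0]; exact h1)
    (n := 3) (by norm_num)
  rw [Finset.sum_range_succ, Finset.sum_range_succ, Finset.sum_range_succ,
    Finset.sum_range_zero] at h
  norm_num [Nat.factorial, abs_of_pos h0] at h
  calc |Real.exp (-ε) - (1 - ε + ε ^ 2 / 2)| = |Real.exp (-ε) - (1 + -ε + ε ^ 2 / 2)| := by
        ring_nf
    _ ≤ ε ^ 3 * (4 / (6 * 3)) := by convert h using 1 <;> norm_num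
    _ ≤ ε ^ 3 := by nlinarith [pow_pos h0 3]

lemma exp_est2 {ε : ℝ} (h0 : 0 < ε) (h1 : ε ≤ 1) :
    |Real.exp (-ε) - (1 - ε)| ≤ ε ^ 2 := by
  have h := Real.exp_bound (x := -ε) (by rw [abs_neg, abs_of_pos h0]; exact h1)
    (n := 2) (by norm_num)
  rw [Finset.sum_range_succ, Finset.sum_range_succ, Finset.sum_range_zero] at h
  norm_num [Nat.factorial, abs_of_pos h0] at h
  calc |Real.exp (-ε) - (1 - ε)| = |Real.exp (-ε) - (1 + -ε)| := by ring_nf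
    _ ≤ ε ^ 2 * (3 / 4) := by convert h using 1 <;> norm_num
    _ ≤ ε ^ 2 := by nlinarith [pow_pos h0 2]

lemma T1 : Tendsto (fun ε : ℝ => (Real.exp (-ε) - 1 + ε) / (2 * ε ^ 2))
    (nhdsWithin 0 (Ioi 0)) (nhds (1/4)) := by
  have hz : Tendsto (fun ε : ℝ => (Real.exp (-ε) - 1 + ε) / (2 * ε ^ 2) - 1/4)
      (nhdsWithin 0 (Ioi 0)) (nhds 0) := by
    apply squeeze_zero_norm'
      (a := fun ε : ℝ => ε / 2)
    · filter_upwards [Ioo_mem_nhdsGT_of_mem (by norm_num : (0:ℝ) ∈ Ico 0 1)] with ε hε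
      obtain ⟨h0, h1⟩ := hε
      have h2 : (0:ℝ) < 2 * ε ^ 2 := by positivity
      have key := exp_est3 h0 h1.le
      rw [Real.norm_eq_abs,
        show (Real.exp (-ε) - 1 + ε) / (2 * ε ^ 2) - 1/4
          = (Real.exp (-ε) - (1 - ε + ε ^ 2 / 2)) / (2 * ε ^ 2) by field_simp; ring,
        abs_div, abs_of_pos h2, div_le_iff₀ h2]
      calc |Real.exp (-ε) - (1 - ε + ε ^ 2 / 2)| ≤ ε ^ 3 := key
        _ ≤ ε / 2 * (2 * ε ^ 2) := by ring_nf; exact le_refl _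
    · have : Tendsto (fun ε : ℝ => ε / 2) (nhdsWithin 0 (Ioi 0)) (nhds (0 / 2)) :=
        (tendsto_id.mono_left nhdsWithin_le_nhds).div_const 2
      simpa using this
  have := hz.add_const (1/4)
  norm_num at this
  refine this.congr fun ε => by ring
lemma T2 : Tendsto (fun ε : ℝ => (1 - Real.exp (-ε)) / (2 * ε))
    (nhdsWithin 0 (Ioi 0)) (nhds (1/2)) := by
  have hz : Tendsto (fun ε : ℝ => (1 - Real.exp (-ε)) / (2 * ε) - 1/2)
      (nhdsWithin 0 (Ioi 0)) (nhds 0) := by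
    apply squeeze_zero_norm' (a := fun ε : ℝ => ε / 2)
    · filter_upwards [Ioo_mem_nhdsGT_of_mem (by norm_num : (0:ℝ) ∈ Ico 0 1)] with ε hε
      obtain ⟨h0, h1⟩ := hε
      have h2 : (0:ℝ) < 2 * ε := by positivity
      have key := exp_est2 h0 h1.le
      rw [Real.norm_eq_abs,
        show (1 - Real.exp (-ε)) / (2 * ε) - 1/2
          = -((Real.exp (-ε) - (1 - ε)) / (2 * ε)) by field_simp; ring,
        abs_neg, abs_div, abs_of_pos h2, div_le_iff₀ h2]
      calc |Real.exp (-ε) - (1 - ε)| ≤ ε ^ 2 := key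
        _ ≤ ε / 2 * (2 * ε) := by ring_nf; exact le_refl _
    · have : Tendsto (fun ε : ℝ => ε / 2) (nhdsWithin 0 (Ioi 0)) (nhds (0 / 2)) :=
        (tendsto_id.mono_left nhdsWithin_le_nhds).div_const 2
      simpa using this
  have := hz.add_const (1/2)
  norm_num at this
  refine this.congr fun ε => by ring

lemma T3 : Tendsto (fun ε : ℝ => (1/2) * (1 - Real.exp (-ε)) * Real.log ε)
    (nhdsWithin 0 (Ioi 0)) (nhds 0) := by
  apply squeeze_zero_norm' (a := fun ε : ℝ => (1/2) * |Real.log ε * ε ^ (1:ℝ)|)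
  · filter_upwards [Ioo_mem_nhdsGT_of_mem (by norm_num : (0:ℝ) ∈ Ico 0 1)] with ε hε
    obtain ⟨h0, h1⟩ := hε
    have hb : |1 - Real.exp (-ε)| ≤ ε := by
      rw [abs_of_nonneg (by linarith [Real.exp_le_exp.mpr (neg_nonpos.mpr h0.le : -ε ≤ 0), Real.exp_zero] : (0:ℝ) ≤ 1 - Real.exp (-ε))]
      linarith [Real.add_one_le_exp (-ε)]
    rw [Real.norm_eq_abs, Real.rpow_one, abs_mul, abs_mul, abs_mul]
    rw [abs_of_pos (by norm_num : (0:ℝ) < 1/2)]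
    have hl : (0:ℝ) ≤ |Real.log ε| := abs_nonneg _
    have := mul_le_mul_of_nonneg_left hb hl
    rw [abs_of_pos h0]
    nlinarith
  · have := (tendsto_log_mul_rpow_nhdsGT_zero one_pos).abs
    rw [abs_zero] at this
    simpa using this.const_mul (1/2 : ℝ)





lemma T4 : Tendsto (fun ε : ℝ => ∫ x in Ioi ε, Real.exp (-x) * Real.log x)
    (nhdsWithin 0 (Ioi 0)) (nhds (∫ x in Ioi (0:ℝ), Real.exp (-x) * Real.log x)) := by
  set g : ℝ → ℝ := fun x => Real.exp (-x) * Real.log x with hg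
  have hprim : ContinuousOn (fun b => ∫ t in (0:ℝ)..b, g t) (Icc (0:ℝ) 1) := by
    have h1 : IntegrableOn g (uIcc (0:ℝ) 1) := by
      rw [uIcc_of_le (by norm_num : (0:ℝ) ≤ 1), integrableOn_Icc_iff_integrableOn_Ioc]
      exact integrable_exp_neg_log.mono_set Ioc_subset_Ioi_self
    simpa [uIcc_of_le (by norm_num : (0:ℝ) ≤ 1)] using
      intervalIntegral.continuousOn_primitive_interval h1
  have hsmall : Tendsto (fun ε : ℝ => ∫ t in (0:ℝ)..ε, g t) (nhdsWithin 0 (Ioi 0)) (nhds 0) := by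
    have h0 : (0:ℝ) ∈ Icc (0:ℝ) 1 := by norm_num
    have := (hprim 0 h0).tendsto
    rw [intervalIntegral.integral_same] at this
    have hmono : nhdsWithin (0:ℝ) (Ioc 0 1) ≤ nhdsWithin 0 (Icc 0 1) :=
      nhdsWithin_mono _ Ioc_subset_Icc_self
    have := this.mono_left hmono
    rwa [nhdsWithin_Ioc_eq_nhdsGT (by norm_num : (0:ℝ) < 1)] at this
  have heq : ∀ ε : ℝ, 0 < ε →
      (∫ x in Ioi ε, g x) = (∫ x in Ioi (0:ℝ), g x) - ∫ t in (0:ℝ)..ε, g t := by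
    intro ε hε
    have hu : Ioc 0 ε ∪ Ioi ε = Ioi (0:ℝ) := Ioc_union_Ioi_eq_Ioi hε.le
    have hd : Disjoint (Ioc (0:ℝ) ε) (Ioi ε) := Ioc_disjoint_Ioi le_rfl
    have h1 : IntegrableOn g (Ioc 0 ε) := integrable_exp_neg_log.mono_set Ioc_subset_Ioi_self
    have h2 : IntegrableOn g (Ioi ε) := integrable_exp_neg_log.mono_set (Ioi_subset_Ioi hε.le)
    have := setIntegral_union hd measurableSet_Ioi h1 h2
    rw [hu] at this
    rw [intervalIntegral.integral_of_le hε.le]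
    linarith [this]
  have := (tendsto_const_nhds (α := ℝ)
    (x := ∫ x in Ioi (0:ℝ), g x) (f := nhdsWithin (0:ℝ) (Ioi 0))).sub hsmall
  rw [sub_zero] at this
  refine this.congr' ?_
  filter_upwards [self_mem_nhdsWithin] with ε hε
  exact (heq ε hε).symm

theorem stmt_8 :
    Tendsto (fun ε : ℝ =>
        (∫ x in Ioi ε, Real.exp (-x) / x ^ 3) - 1 / (2 * ε ^ 2) + 1 / ε
          + (1 / 2) * Real.log ε)
      (nhdsWithin 0 (Ioi 0)) (nhds (3 / 4 - Real.eulerMascheroniConstant / 2)) := by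
  have hT4 : Tendsto (fun ε : ℝ => (1/2) * ∫ x in Ioi ε, Real.exp (-x) * Real.log x)
      (nhdsWithin 0 (Ioi 0)) (nhds ((1/2) * (- Real.eulerMascheroniConstant))) := by
    have := T4.const_mul (1/2 : ℝ)
    rwa [integral_exp_neg_log] at this
  have hsum := ((T1.add T2).add T3).add hT4
  rw [show (1/4 : ℝ) + 1/2 + 0 + (1/2) * (- Real.eulerMascheroniConstant)
      = 3/4 - Real.eulerMascheroniConstant / 2 by ring] at hsum
  refine hsum.congr' ?_
  filter_upwards [self_mem_nhdsWithin] with ε hε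
  have hε : (0:ℝ) < ε := hε
  rw [key_identity hε]
  have hε0 : ε ≠ 0 := hε.ne'
  simp only [Phi]
  field_simp
  ring
end

section
/- The Hadamard finite-part integral f.p.∫_0^∞ x^{-4} e^{-x} dx equals −11/36 + γ/6. -/
open Real MeasureTheory Filter Set Finset

lemma myInt1 {ε : ℝ} (hε : 0 < ε) (n : ℕ) :
    IntegrableOn (fun x => Real.exp (-x) / x ^ n) (Ioi ε) := by
  apply Integrable.mono' (g := fun x => Real.exp (-x) / ε ^ n)
  · exact (exp_neg_integrableOn_Ioi ε one_pos).congr_fun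
      (fun x hx => by rw [neg_one_mul]) measurableSet_Ioi |>.div_const _
  · apply ContinuousOn.aestronglyMeasurable _ measurableSet_Ioi
    apply ContinuousOn.div (by fun_prop) (by fun_prop)
    intro x hx
    exact pow_ne_zero _ (ne_of_gt (hε.trans hx))
  · filter_upwards [ae_restrict_mem measurableSet_Ioi] with x hx
    rw [norm_div, Real.norm_eq_abs, Real.norm_eq_abs, abs_of_pos (Real.exp_pos _),
      abs_of_pos (pow_pos (hε.trans hx) n)]
    exact div_le_div_of_nonneg_left (Real.exp_pos _).le (pow_pos hε n)
      (pow_le_pow_left₀ hε.le (le_of_lt hx) n)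

lemma myInt2 : IntegrableOn (fun x => Real.log x * Real.exp (-x)) (Ioi 0) := by
  apply Integrable.mono' (g := fun x => Real.exp (-x) * x ^ ((2:ℝ) - 1)
      + 2 * (Real.exp (-x) * x ^ ((1/2:ℝ) - 1)))
  · exact (Real.GammaIntegral_convergent two_pos).add
      ((Real.GammaIntegral_convergent one_half_pos).const_mul 2)
  · apply ContinuousOn.aestronglyMeasurable _ measurableSet_Ioi
    apply ContinuousOn.mul _ (by fun_prop)
    exact Real.continuousOn_log.mono (fun x hx => ne_of_gt hx)
  · filter_upwards [ae_restrict_mem measurableSet_Ioi] with x hx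
    have hx0 : (0:ℝ) < x := hx
    have hlog : |Real.log x| ≤ x + 2 / Real.sqrt x := by
      have hs : (0:ℝ) < Real.sqrt x := Real.sqrt_pos.2 hx0
      rw [abs_le]
      constructor
      · have h1 : Real.log (Real.sqrt x)⁻¹ ≤ (Real.sqrt x)⁻¹ - 1 :=
          Real.log_le_sub_one_of_pos (inv_pos.2 hs)
        rw [Real.log_inv, Real.log_sqrt hx0.le] at h1
        have h2 : 2 / Real.sqrt x = 2 * (Real.sqrt x)⁻¹ := by rw [div_eq_mul_inv]
        nlinarith [inv_pos.2 hs]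
      · have := Real.log_le_sub_one_of_pos hx0
        have : (0:ℝ) ≤ 2 / Real.sqrt x := by positivity
        linarith [Real.log_le_sub_one_of_pos hx0]
    rw [Real.norm_eq_abs, abs_mul, abs_of_pos (Real.exp_pos _)]
    have h2 : x ^ ((2:ℝ) - 1) = x := by
      norm_num
    have h12 : x ^ ((1/2:ℝ) - 1) = 1 / Real.sqrt x := by
      rw [show (1/2:ℝ)-1 = -(1/2) by norm_num, Real.rpow_neg hx0.le, Real.sqrt_eq_rpow]; exact (one_div _).symm
    rw [h2, h12]
    calc |Real.log x| * Real.exp (-x) ≤ (x + 2 / Real.sqrt x) * Real.exp (-x) := by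
          apply mul_le_mul_of_nonneg_right hlog (Real.exp_pos _).le
      _ = Real.exp (-x) * x + 2 * (Real.exp (-x) * (1 / Real.sqrt x)) := by ring

lemma myGamma : (∫ t in Ioi (0:ℝ), Real.log t * Real.exp (-t)) = -Real.eulerMascheroniConstant := by
  have h1 : HasDerivAt Complex.GammaIntegral
      (∫ t : ℝ in Ioi 0, (t : ℂ) ^ ((1:ℂ) - 1) * (Real.log t * Real.exp (-t))) 1 :=
    Complex.hasDerivAt_GammaIntegral (by norm_num)
  have heq : Complex.Gamma =ᶠ[nhds (1:ℂ)] Complex.GammaIntegral := by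
    filter_upwards [IsOpen.mem_nhds (isOpen_lt continuous_const Complex.continuous_re)
      (by norm_num : (0:ℂ).re < (1:ℂ).re)] with s hs
    exact Complex.Gamma_eq_integral hs
  have h2 : HasDerivAt Complex.Gamma
      (∫ t : ℝ in Ioi 0, (t : ℂ) ^ ((1:ℂ) - 1) * (Real.log t * Real.exp (-t))) 1 :=
    h1.congr_of_eventuallyEq heq
  have h3 := h2.unique Complex.hasDerivAt_Gamma_one
  have h4 : (∫ t : ℝ in Ioi 0, (t : ℂ) ^ ((1:ℂ) - 1) * (Real.log t * Real.exp (-t)))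
      = ∫ t in Ioi (0:ℝ), ((Real.log t * Real.exp (-t) : ℝ) : ℂ) := by
    apply setIntegral_congr_fun measurableSet_Ioi
    intro t ht
    simp [Complex.cpow_zero, Complex.ofReal_mul]
  have h6 : (∫ t in Ioi (0:ℝ), ((Real.log t * Real.exp (-t) : ℝ) : ℂ))
      = ((∫ t in Ioi (0:ℝ), Real.log t * Real.exp (-t) : ℝ) : ℂ) := integral_ofReal
  rw [h4, h6] at h3
  exact_mod_cast h3


lemma myExpDeriv (x : ℝ) : HasDerivAt (fun x : ℝ => Real.exp (-x)) (-Real.exp (-x)) x := by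
  exact ((Real.hasDerivAt_exp (-x)).comp x (hasDerivAt_neg x)).congr_deriv (by ring)

lemma myIBP {ε : ℝ} (hε : 0 < ε) (m : ℕ) :
    (∫ x in Ioi ε, Real.exp (-x) / x ^ (m + 2))
      = Real.exp (-ε) / (((m:ℝ)+1) * ε ^ (m+1))
        - (1/((m:ℝ)+1)) * ∫ x in Ioi ε, Real.exp (-x) / x ^ (m+1) := by
  set f : ℝ → ℝ := fun x => -(1/((m:ℝ)+1)) * (Real.exp (-x) * (x ^ (m+1))⁻¹) with hf
  set g1 : ℝ → ℝ := fun x => Real.exp (-x) / x ^ (m+2)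
  set g2 : ℝ → ℝ := fun x => (1/((m:ℝ)+1)) * (Real.exp (-x) / x ^ (m+1))
  have hm1 : ((m:ℝ)+1) ≠ 0 := by positivity
  have key : (∫ x in Ioi ε, (g1 x + g2 x)) = 0 - f ε := by
    apply integral_Ioi_of_hasDerivAt_of_tendsto
    · apply ContinuousAt.continuousWithinAt
      exact continuousAt_const.mul
        (((Real.continuous_exp.comp continuous_neg).continuousAt).mul
          (ContinuousAt.inv₀ (continuous_pow (m+1)).continuousAt (pow_ne_zero _ hε.ne')))
    · intro x hx
      have hx0 : (0:ℝ) < x := hε.trans hx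
      have h2 : HasDerivAt (fun x : ℝ => (x ^ (m+1))⁻¹)
          (-(((m:ℝ)+1) * x ^ m) / (x ^ (m+1)) ^ 2) x := by
        have h := (hasDerivAt_pow (m+1) x).inv (pow_ne_zero _ hx0.ne'); simp at h; exact h
      have := ((myExpDeriv x).mul h2).const_mul (-(1/((m:ℝ)+1)))
      convert this using 1
      · rfl
      · rfl
      have hxne : x ≠ 0 := hx0.ne'
      have hp : (x ^ (m+1)) ^ 2 = x ^ (m+2) * x ^ m := by
        rw [← pow_mul, ← pow_add]; congr 1; ring
      have h2' : x ^ (m+2) ≠ 0 := pow_ne_zero _ hxne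
      have h4' : x ^ m ≠ 0 := pow_ne_zero _ hxne
      have hkey : -(((m:ℝ)+1) * x ^ m) / (x ^ (m+1)) ^ 2
          = -(((m:ℝ)+1)) * (x ^ (m+2))⁻¹ := by
        rw [hp]
        rw [div_eq_iff (by positivity : x ^ (m+2) * x ^ m ≠ 0)]
        field_simp
      rw [hkey]
      linear_combination (-(Real.exp (-x)) * (x ^ (m+2))⁻¹) * (one_div_mul_cancel hm1)
    · exact ((myInt1 hε (m+2)).add ((myInt1 hε (m+1)).const_mul _))
    · have : Tendsto (fun x : ℝ => Real.exp (-x) * (x ^ (m+1))⁻¹) atTop (nhds 0) := by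
        simpa using (Real.tendsto_exp_neg_atTop_nhds_zero).mul
          (tendsto_inv_atTop_zero.comp (tendsto_pow_atTop (Nat.succ_ne_zero m)))
      have h5 := this.const_mul (-(1/((m:ℝ)+1)))
      rw [mul_zero] at h5
      exact h5
  rw [integral_add (myInt1 hε (m+2)) ((myInt1 hε (m+1)).const_mul _)] at key
  rw [integral_const_mul] at key
  have hfε : f ε = -(1/((m:ℝ)+1)) * (Real.exp (-ε) * (ε ^ (m+1))⁻¹) := rfl
  rw [hfε] at key
  have hεne : ε ^ (m+1) ≠ 0 := pow_ne_zero _ hε.ne'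
  field_simp at key ⊢
  linarith [key]

lemma myIBPlog {ε : ℝ} (hε : 0 < ε) :
    (∫ x in Ioi ε, Real.exp (-x) / x ^ 1)
      = -(Real.log ε * Real.exp (-ε)) + ∫ x in Ioi ε, Real.log x * Real.exp (-x) := by
  have hint2 : IntegrableOn (fun x => Real.log x * Real.exp (-x)) (Ioi ε) :=
    myInt2.mono_set (Ioi_subset_Ioi hε.le)
  have key : (∫ x in Ioi ε, (Real.exp (-x) / x ^ 1 + (-1) * (Real.log x * Real.exp (-x))))
      = 0 - Real.log ε * Real.exp (-ε) := by
    apply integral_Ioi_of_hasDerivAt_of_tendsto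
      (f := fun x => Real.log x * Real.exp (-x))
    · apply ContinuousAt.continuousWithinAt
      exact (Real.continuousAt_log hε.ne').mul
        ((Real.continuous_exp.comp continuous_neg).continuousAt)
    · intro x hx
      have hx0 : (0:ℝ) < x := hε.trans hx
      have := (Real.hasDerivAt_log hx0.ne').mul (myExpDeriv x)
      convert this using 1
      · rfl
      · rfl
      rw [pow_one]
      ring
    · exact (myInt1 hε 1).add (hint2.const_mul _)
    · apply squeeze_zero_norm' ?_ (tendsto_pow_mul_exp_neg_atTop_nhds_zero 1)
      filter_upwards [eventually_ge_atTop (1:ℝ)] with x hx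
      have h1 : (0:ℝ) < x := lt_of_lt_of_le one_pos hx
      rw [norm_mul, Real.norm_eq_abs, Real.norm_eq_abs, abs_of_pos (Real.exp_pos _),
        abs_of_nonneg (Real.log_nonneg hx), pow_one]
      have hlx : Real.log x ≤ x := (Real.log_le_sub_one_of_pos h1).trans (by linarith)
      exact mul_le_mul_of_nonneg_right hlx (Real.exp_pos _).le
  rw [integral_add (myInt1 hε 1) (hint2.const_mul _), integral_const_mul] at key
  linarith [key]


lemma myJlim : Tendsto (fun ε : ℝ => ∫ x in Ioi ε, Real.log x * Real.exp (-x))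
    (nhdsWithin 0 (Ioi 0)) (nhds (∫ x in Ioi (0:ℝ), Real.log x * Real.exp (-x))) := by
  have h := MeasureTheory.tendsto_integral_filter_of_dominated_convergence
    (μ := volume.restrict (Ioi (0:ℝ)))
    (F := fun (ε : ℝ) (x : ℝ) => Set.indicator (Ioi ε) (fun x => Real.log x * Real.exp (-x)) x)
    (f := fun x => Real.log x * Real.exp (-x))
    (bound := fun x => |Real.log x * Real.exp (-x)|)
    (l := nhdsWithin 0 (Ioi 0)) ?_ ?_ ?_ ?_
  · apply h.congr'
    filter_upwards [self_mem_nhdsWithin] with ε (hε : (0:ℝ) < ε)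
    rw [integral_indicator measurableSet_Ioi, Measure.restrict_restrict measurableSet_Ioi,
      inter_eq_self_of_subset_left (Ioi_subset_Ioi hε.le)]
  · filter_upwards with ε
    exact ((Real.measurable_log.mul (by fun_prop)).aestronglyMeasurable).indicator
      measurableSet_Ioi
  · filter_upwards with ε
    filter_upwards with x
    exact norm_indicator_le_norm_self _ _
  · exact myInt2.abs
  · filter_upwards [ae_restrict_mem measurableSet_Ioi] with x (hx : (0:ℝ) < x)
    apply Tendsto.congr' _ tendsto_const_nhds
    filter_upwards [eventually_nhdsWithin_of_eventually_nhds (gt_mem_nhds hx)] with ε hε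
    exact (Set.indicator_of_mem (Set.mem_Ioi.mpr hε) (fun x => Real.log x * Real.exp (-x))).symm

lemma myBlim : Tendsto (fun ε : ℝ =>
      ((2 - ε + ε^2) * Real.exp (-ε) - 2 + 3*ε - 3*ε^2) / (6 * ε^3))
    (nhdsWithin 0 (Ioi 0)) (nhds (-11/36)) := by
  have h0 : Tendsto (fun ε : ℝ => ε) (nhdsWithin 0 (Ioi 0)) (nhds 0) :=
    tendsto_id.mono_left nhdsWithin_le_nhds
  have key : Tendsto (fun ε : ℝ =>
      ((2 - ε + ε^2) * Real.exp (-ε) - 2 + 3*ε - 3*ε^2) / (6 * ε^3) + 11/36)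
      (nhdsWithin 0 (Ioi 0)) (nhds 0) := by
    apply squeeze_zero_norm' ?_ h0
    filter_upwards [self_mem_nhdsWithin,
      eventually_nhdsWithin_of_eventually_nhds (eventually_le_nhds one_pos)]
      with ε (hε1 : (0:ℝ) < ε) hε2
    set R := Real.exp (-ε) - (1 - ε + ε^2/2 - ε^3/6) with hRdef
    have hexp : Real.exp (-ε) = 1 - ε + ε^2/2 - ε^3/6 + R := by rw [hRdef]; ring
    have hR : |R| ≤ ε^4 := by
      have hb := Real.exp_bound (x := -ε)
        (by rw [abs_neg, abs_of_pos hε1]; exact hε2) (n := 4) (by norm_num)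
      have hs : ∑ m ∈ Finset.range 4, (-ε)^m / (m.factorial : ℝ) = 1 - ε + ε^2/2 - ε^3/6 := by
        simp [Finset.sum_range_succ, Nat.factorial]
        ring
      rw [hs, abs_neg, abs_of_pos hε1] at hb
      have hb2 : |R| ≤ ε^4 * (5/96) := by
        convert hb using 2
        norm_num [Nat.factorial]
      nlinarith [pow_nonneg hε1.le 4]
    have hiden : ((2 - ε + ε^2) * Real.exp (-ε) - 2 + 3*ε - 3*ε^2) / (6 * ε^3) + 11/36
        = ((2/3)*ε^4 - ε^5/6 + (2 - ε + ε^2) * R) / (6*ε^3) := by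
      rw [hexp]
      field_simp
      ring
    rw [hiden, norm_div, Real.norm_eq_abs, Real.norm_eq_abs,
      abs_of_pos (by positivity : (0:ℝ) < 6*ε^3), div_le_iff₀ (by positivity)]
    have e1 : |(2 - ε + ε^2)| ≤ 4 := by
      rw [abs_le]; constructor <;> nlinarith
    have e2 : |(2/3)*ε^4 - ε^5/6 + (2 - ε + ε^2) * R|
        ≤ (2/3)*ε^4 + ε^5/6 + 4 * ε^4 := by
      calc |(2/3)*ε^4 - ε^5/6 + (2 - ε + ε^2) * R|
          ≤ |(2/3)*ε^4 - ε^5/6| + |(2 - ε + ε^2) * R| := abs_add_le _ _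
        _ ≤ (|(2/3)*ε^4| + |ε^5/6|) + |(2 - ε + ε^2)| * |R| := by
            rw [abs_mul]; gcongr; exact abs_sub _ _
        _ ≤ (2/3)*ε^4 + ε^5/6 + 4 * ε^4 := by
            rw [abs_of_pos (by positivity : (0:ℝ) < (2/3)*ε^4),
              abs_of_pos (by positivity : (0:ℝ) < ε^5/6)]
            have : |(2 - ε + ε^2)| * |R| ≤ 4 * ε^4 := by
              apply mul_le_mul e1 hR (abs_nonneg _) (by norm_num)
            linarith
    have e3 : ε^5 ≤ ε^4 := pow_le_pow_of_le_one hε1.le hε2 (by norm_num)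
    nlinarith [pow_nonneg hε1.le 4]
  have := key.sub_const (11/36)
  simp only [add_sub_cancel_right, zero_sub] at this
  convert this using 2
  norm_num

lemma myLoglim : Tendsto (fun ε : ℝ => Real.log ε * (Real.exp (-ε) - 1) / 6)
    (nhdsWithin 0 (Ioi 0)) (nhds 0) := by
  have hb : Tendsto (fun ε : ℝ => |Real.log ε * ε ^ (1:ℝ)|) (nhdsWithin 0 (Ioi 0)) (nhds 0) := by
    have := (tendsto_log_mul_rpow_nhdsGT_zero one_pos).abs
    simpa using this
  apply squeeze_zero_norm' ?_ hb
  filter_upwards [self_mem_nhdsWithin] with ε (hε : (0:ℝ) < ε)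
  rw [Real.rpow_one]
  have h1 : |Real.exp (-ε) - 1| ≤ ε := by
    rw [abs_le]
    constructor
    · linarith [Real.add_one_le_exp (-ε)]
    · have h2 : Real.exp (-ε) ≤ 1 := Real.exp_le_one_iff.mpr (by linarith)
      linarith
  calc ‖Real.log ε * (Real.exp (-ε) - 1) / 6‖
      = |Real.log ε| * |Real.exp (-ε) - 1| / 6 := by
        rw [Real.norm_eq_abs, abs_div, abs_mul]; norm_num
    _ ≤ |Real.log ε| * ε / 6 := by gcongr
    _ ≤ |Real.log ε| * ε := by
        apply div_le_self (by positivity) (by norm_num)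
    _ ≤ |Real.log ε * ε| := le_of_eq (by rw [abs_mul, abs_of_pos hε])

theorem stmt_9 :
    Tendsto (fun ε : ℝ =>
        (∫ x in Ioi ε, Real.exp (-x) / x ^ 4)
          - ∑ k ∈ Finset.range 3,
              ε ^ ((k : ℤ) - 3) * (-1 : ℝ) ^ k / (Nat.factorial k * (3 - k : ℝ))
          + Real.log ε / 6 * (-1))
      (nhdsWithin 0 (Ioi 0)) (nhds (-11 / 36 + Real.eulerMascheroniConstant / 6)) := by
  have hcomb := (myBlim.add myLoglim).add (myJlim.const_mul (-1/6 : ℝ))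
  rw [myGamma] at hcomb
  have hlim : (-11/36 : ℝ) + 0 + (-1/6) * (-Real.eulerMascheroniConstant)
      = -11/36 + Real.eulerMascheroniConstant / 6 := by ring
  rw [hlim] at hcomb
  apply Tendsto.congr' _ hcomb
  filter_upwards [self_mem_nhdsWithin] with ε (hε : (0:ℝ) < ε)
  have h4 := myIBP hε 2
  have h3 := myIBP hε 1
  have h2 := myIBP hε 0
  have h1 := myIBPlog hε
  norm_num at h4 h3 h2 h1
  have p3 : ε ^ (-3:ℤ) = (ε^3)⁻¹ := by
    rw [zpow_neg]; norm_cast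
  have p2 : ε ^ (-2:ℤ) = (ε^2)⁻¹ := by
    rw [zpow_neg]; norm_cast
  have p1 : ε ^ (-1:ℤ) = ε⁻¹ := by
    rw [zpow_neg, zpow_one]
  have hsum : (∑ k ∈ Finset.range 3,
      ε ^ ((k : ℤ) - 3) * (-1 : ℝ) ^ k / (Nat.factorial k * (3 - k : ℝ)))
      = (ε^3)⁻¹/3 - (ε^2)⁻¹/2 + ε⁻¹/2 := by
    rw [Finset.sum_range_succ, Finset.sum_range_succ, Finset.sum_range_succ,
      Finset.sum_range_zero]
    norm_num [p3, p2, p1, Nat.factorial]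
    try ring
  rw [h4, h3, h2, h1, hsum]
  have hne : ε ≠ 0 := hε.ne'
  field_simp
  ring
end
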